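/- Let F : ℝ → ℂ be twice differentiable and let a(t) = |F(t)|. At every point t where F(t) ≠ 0, the amplitude a is twice differentiable and satisfies a''(t)/a(t) = Re(F''(t)·conj(F(t)))/|F(t)|² + (Im(F'(t)·conj(F(t))))²/|F(t)|⁴. -/

import Mathlib

open Real Filter Topology

/-- For a twice differentiable `F : ℝ → ℂ` with amplitude `a = |F|`,
at every point where `F` does not vanish the amplitude is twice differentiable and
`a''/a = Re(F'' ⬝ conj F)/|F|² + (Im(F' ⬝ conj F))²/|F|⁴`. -/
theorem chu_mei_quotient_formula
    (F : ℝ → ℂ) (hF : ∀ t, DifferentiableAt ℝ F t)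
    (hF' : ∀ t, DifferentiableAt ℝ (deriv F) t)
    (a : ℝ → ℝ) (ha : a = fun t => ‖F t‖)
    (t : ℝ) (ht : F t ≠ 0) :
    DifferentiableAt ℝ a t ∧ DifferentiableAt ℝ (deriv a) t ∧
    deriv (deriv a) t / a t =
      (deriv (deriv F) t * (starRingEnd ℂ) (F t)).re / ‖F t‖ ^ 2 +
      ((deriv F t * (starRingEnd ℂ) (F t)).im) ^ 2 / ‖F t‖ ^ 4 := by
  set N : ℝ → ℝ := fun s => (deriv F s * (starRingEnd ℂ) (F s)).re with hNdef
  have haeq : a = fun x => Real.sqrt (Complex.normSq (F x)) := by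
    rw [ha]; funext x; rw [Complex.norm_def]
  -- first derivative of a at any point where F ≠ 0
  have hNd : ∀ s, F s ≠ 0 → HasDerivAt a (N s / ‖F s‖) s := by
    intro s hs
    have h1 : HasDerivAt F (deriv F s) s := (hF s).hasDerivAt
    have hre : HasDerivAt (fun x => (F x).re) ((deriv F s).re) s :=
      Complex.reCLM.hasFDerivAt.comp_hasDerivAt s h1
    have him : HasDerivAt (fun x => (F x).im) ((deriv F s).im) s :=
      Complex.imCLM.hasFDerivAt.comp_hasDerivAt s h1
    have hsq : HasDerivAt (fun x => Complex.normSq (F x))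
        (2 * N s) s := by
      have : HasDerivAt (fun x => (F x).re * (F x).re + (F x).im * (F x).im) _ s :=
        (hre.mul hre).add (him.mul him)
      simp only [Complex.normSq_apply]
      convert this using 1
      simp only [hNdef, Complex.mul_re, Complex.conj_re, Complex.conj_im]
      ring
    have hne : Complex.normSq (F s) ≠ 0 := by
      simpa [Complex.normSq_eq_zero] using hs
    have := hsq.sqrt hne
    rw [haeq]
    convert this using 1
    rw [Complex.norm_def]
    ring
  have hmem : ∀ᶠ s in 𝓝 t, F s ≠ 0 := (hF t).continuousAt.eventually_ne ht
  have hderiv_a : deriv a =ᶠ[𝓝 t] fun s => N s / a s := by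
    filter_upwards [hmem] with s hs
    rw [(hNd s hs).deriv, ha]
  -- differentiability of N at t
  have h1t : HasDerivAt F (deriv F t) t := (hF t).hasDerivAt
  have hNt : HasDerivAt N
      ((deriv (deriv F) t * (starRingEnd ℂ) (F t)
        + deriv F t * (starRingEnd ℂ) (deriv F t)).re) t := by
    have hmul : HasDerivAt (fun s => deriv F s * (starRingEnd ℂ) (F s))
        (deriv (deriv F) t * (starRingEnd ℂ) (F t)
          + deriv F t * (starRingEnd ℂ) (deriv F t)) t :=
      (hF' t).hasDerivAt.mul h1t.star
    exact Complex.reCLM.hasFDerivAt.comp_hasDerivAt t hmul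
  have hAt : HasDerivAt a (N t / ‖F t‖) t := hNd t ht
  have hA0 : a t ≠ 0 := by rw [ha]; simpa using ht
  have haF : a t = ‖F t‖ := by rw [ha]
  have hb : HasDerivAt (fun s => N s / a s)
      (((deriv (deriv F) t * (starRingEnd ℂ) (F t)
        + deriv F t * (starRingEnd ℂ) (deriv F t)).re * a t
        - N t * (N t / ‖F t‖)) / (a t) ^ 2) t := by
    have := hNt.div hAt hA0
    exact this
  have hdiff2 : DifferentiableAt ℝ (deriv a) t :=
    hb.differentiableAt.congr_of_eventuallyEq hderiv_a
  have hval : deriv (deriv a) t =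
      ((deriv (deriv F) t * (starRingEnd ℂ) (F t)
        + deriv F t * (starRingEnd ℂ) (deriv F t)).re * a t
        - N t * (N t / ‖F t‖)) / (a t) ^ 2 := by
    rw [hderiv_a.deriv_eq]
    exact hb.deriv
  refine ⟨hAt.differentiableAt, hdiff2, ?_⟩
  -- final algebra
  rw [hval, haF]
  set A : ℝ := ‖F t‖ with hA
  have hApos : 0 < A := by rw [hA]; exact norm_pos_iff.mpr ht
  set R : ℝ := (deriv F t * (starRingEnd ℂ) (F t)).re with hR
  set I : ℝ := (deriv F t * (starRingEnd ℂ) (F t)).im with hI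
  have hP : (deriv F t * (starRingEnd ℂ) (deriv F t)).re
      = Complex.normSq (deriv F t) := by
    rw [Complex.mul_conj]; simp
  have hid : Complex.normSq (deriv F t) * A ^ 2 = R ^ 2 + I ^ 2 := by
    have h1 : A ^ 2 = Complex.normSq (F t) := by
      rw [hA, Complex.sq_norm]
    have h2 : Complex.normSq (deriv F t) * Complex.normSq (F t)
        = Complex.normSq (deriv F t * (starRingEnd ℂ) (F t)) := by
      rw [Complex.normSq_mul, Complex.normSq_conj]
    rw [h1, h2, Complex.normSq_apply, hR, hI]; ring
  have hNteq : N t = R := rfl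
  rw [Complex.add_re, hP, hNteq]
  have hA4 : A ^ 4 ≠ 0 := by positivity
  field_simp
  linear_combination hid
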